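/- Let f ∈ S_{p,μ}, α ≥ β > 0 and δ > 0. Then ω_α(f,δ)_{p,μ} ≤ 2^{α−β} ω_β(f,δ)_{p,μ}, where {α−β} is the least integer k with k ≥ α−β. -/

import Mathlib

open MeasureTheory Filter Topology Asymptotics

noncomputable section

/-- The `k`-th Fourier coefficient of a (2π-periodic) function `f : ℝ → ℂ`:
`f̂(k) = (2π)⁻¹ ∫_0^{2π} f(t) e^{-ikt} dt`. -/
def fcoeff (f : ℝ → ℂ) (k : ℤ) : ℂ :=
  (1 / (2 * (Real.pi : ℂ))) *
    ∫ t in (0:ℝ)..(2 * Real.pi), f t * Complex.exp (-(Complex.I * (k : ℂ) * (t : ℂ)))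

/-- The admissible set defining the Luxemburg norm:
`{a > 0 : Σ_k μ_k |f̂(k)/a|^{p_k} ≤ 1}` (with the sum required to converge). -/
def lpSet (p μ : ℤ → ℝ) (f : ℝ → ℂ) : Set ℝ :=
  {a : ℝ | 0 < a ∧
    Summable (fun k : ℤ => μ k * (‖fcoeff f k‖ / a) ^ (p k)) ∧
    ∑' k : ℤ, μ k * (‖fcoeff f k‖ / a) ^ (p k) ≤ 1}

/-- The Luxemburg norm `‖f‖_{p,μ}`. -/
def luxNorm (p μ : ℤ → ℝ) (f : ℝ → ℂ) : ℝ := sInf (lpSet p μ f)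

/-- Membership in the space `S_{p,μ}`: `f` is 2π-periodic, integrable on a period, and
has finite Luxemburg norm (i.e. the admissible set is nonempty). -/
def MemS (p μ : ℤ → ℝ) (f : ℝ → ℂ) : Prop :=
  Function.Periodic f (2 * Real.pi) ∧ IntervalIntegrable f volume 0 (2 * Real.pi) ∧
    (lpSet p μ f).Nonempty

/-- Generalized binomial coefficient `binom(α,j) = α(α−1)⋯(α−j+1)/j!`. -/
def gbinom (α : ℝ) (j : ℕ) : ℝ :=
  (∏ i ∈ Finset.range j, (α - (i : ℝ))) / (j.factorial : ℝ)

/-- Fractional difference `Δ_h^α f(x) = Σ_{j=0}^∞ (−1)^j binom(α,j) f(x − jh)`. -/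
def fracDiff (α h : ℝ) (f : ℝ → ℂ) (x : ℝ) : ℂ :=
  ∑' j : ℕ, (-1 : ℂ) ^ j * (gbinom α j : ℂ) * f (x - (j : ℝ) * h)

/-- Modulus of smoothness `ω_α(f,δ)_{p,μ} = sup_{|h| ≤ δ} ‖Δ_h^α f‖_{p,μ}`. -/
def modulus (p μ : ℤ → ℝ) (α : ℝ) (f : ℝ → ℂ) (δ : ℝ) : ℝ :=
  ⨆ h : {h : ℝ // |h| ≤ δ}, luxNorm p μ (fracDiff α h.1 f)

/-- Trigonometric polynomial of degree at most `n - 1` with coefficients `c`: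
`Σ_{|k| ≤ n-1} c_k e^{ikx}`. -/
def trigSum (c : ℤ → ℂ) (n : ℕ) (x : ℝ) : ℂ :=
  ∑ k ∈ Finset.Ioo (-(n : ℤ)) (n : ℤ), c k * Complex.exp (Complex.I * (k : ℂ) * (x : ℂ))

/-- Best approximation `E_n(f)_{p,μ}` of `f` by trigonometric polynomials of degree `≤ n-1`. -/
def bestApprox (p μ : ℤ → ℝ) (n : ℕ) (f : ℝ → ℂ) : ℝ :=
  sInf {r : ℝ | ∃ c : ℤ → ℂ, r = luxNorm p μ (fun x => f x - trigSum c n x)}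

/-- `g` is the ψ-derivative of `f`: `ĝ(k) = f̂(k)/ψ_k` for `k ≠ 0` (and `ĝ(0) = 0`),
with `g` 2π-periodic and integrable on a period. -/
def IsPsiDeriv (ψ : ℤ → ℂ) (f g : ℝ → ℂ) : Prop :=
  Function.Periodic g (2 * Real.pi) ∧ IntervalIntegrable g volume 0 (2 * Real.pi) ∧
    fcoeff g 0 = 0 ∧ ∀ k : ℤ, k ≠ 0 → fcoeff g k = fcoeff f k / ψ k

/-- Trigonometric polynomial of degree at most `n`: `τ_n(x) = Σ_{|k| ≤ n} c_k e^{ikx}`. -/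
def trigPoly (c : ℤ → ℂ) (n : ℕ) (x : ℝ) : ℂ :=
  ∑ k ∈ Finset.Icc (-(n : ℤ)) (n : ℤ), c k * Complex.exp (Complex.I * (k : ℂ) * (x : ℂ))

/-- ψ-derivative of the trigonometric polynomial with coefficients `c`:
`τ_n^ψ(x) = Σ_{0<|k|≤n} (c_k/ψ_k) e^{ikx}`. -/
def trigPolyPsi (ψ : ℤ → ℂ) (c : ℤ → ℂ) (n : ℕ) (x : ℝ) : ℂ :=
  ∑ k ∈ Finset.Icc (-(n : ℤ)) (n : ℤ),
    (if k = 0 then 0 else c k / ψ k) * Complex.exp (Complex.I * (k : ℂ) * (x : ℂ))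

open Finset

lemma gbinom_zero (α : ℝ) : gbinom α 0 = 1 := by simp [gbinom]

lemma descPochhammer_smeval_real (α : ℝ) (n : ℕ) :
    (descPochhammer ℤ n).smeval α = ∏ i ∈ Finset.range n, (α - (i : ℝ)) := by
  induction n with
  | zero => simp [descPochhammer_zero, Polynomial.smeval_one]
  | succ n ih =>
    rw [descPochhammer_succ_right, Polynomial.smeval_mul, ih, Finset.prod_range_succ,
      Polynomial.smeval_sub, Polynomial.smeval_X, Polynomial.smeval_natCast]
    simp

lemma gbinom_eq_choose (α : ℝ) (n : ℕ) : gbinom α n = Ring.choose α n := by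
  have h := Ring.descPochhammer_eq_factorial_smul_choose (R := ℝ) α n
  rw [descPochhammer_smeval_real] at h
  have hf : ((n.factorial : ℝ)) ≠ 0 := Nat.cast_ne_zero.2 (Nat.factorial_ne_zero _)
  rw [gbinom, h, nsmul_eq_mul, mul_div_cancel_left₀ _ hf]

lemma gbinom_add (x y : ℝ) (n : ℕ) :
    gbinom (x + y) n = ∑ ij ∈ Finset.HasAntidiagonal.antidiagonal n, gbinom x ij.1 * gbinom y ij.2 := by
  simp only [gbinom_eq_choose]
  exact Ring.add_choose_eq n (Commute.all x y)

lemma gbinom_pascal (x : ℝ) (n : ℕ) :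
    gbinom x (n + 1) = gbinom (x - 1) (n + 1) + gbinom (x - 1) n := by
  have hfacn : ((n.factorial : ℝ)) ≠ 0 := Nat.cast_ne_zero.2 (Nat.factorial_ne_zero _)
  have h1 : ∏ i ∈ Finset.range (n+1), (x - (i:ℝ)) =
      (∏ i ∈ Finset.range n, (x - 1 - (i:ℝ))) * x := by
    rw [Finset.prod_range_succ']
    congr 1
    · exact Finset.prod_congr rfl (fun i _ => by push_cast; ring)
    · simp
  have h2 : ∏ i ∈ Finset.range (n+1), (x - 1 - (i:ℝ)) =
      (∏ i ∈ Finset.range n, (x - 1 - (i:ℝ))) * (x - 1 - n) := by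
    have := Finset.prod_range_succ (fun i => x - 1 - (i:ℝ)) n
    simpa using this
  unfold gbinom
  rw [h1, h2, Nat.factorial_succ]
  push_cast
  field_simp
  ring

lemma prod_flip (a : ℕ → ℝ) (j : ℕ) :
    ∏ i ∈ range j, (-(a i)) = (-1 : ℝ) ^ j * ∏ i ∈ range j, a i := by
  have : ∀ i ∈ range j, (-(a i)) = (-1 : ℝ) * a i := fun i _ => by ring
  rw [Finset.prod_congr rfl this, Finset.prod_mul_distrib, Finset.prod_const, Finset.card_range]

lemma gbinom_sign_lower {α : ℝ} (h1 : α ≤ 1) (j : ℕ) :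
    0 ≤ (-1 : ℝ) ^ j * gbinom (α - 1) j := by
  have key : ∏ i ∈ range j, (α - 1 - (i : ℝ)) = (-1:ℝ)^j * ∏ i ∈ range j, (1 + (i:ℝ) - α) := by
    rw [← prod_flip]
    exact Finset.prod_congr rfl (fun i _ => by ring)
  have hnn : 0 ≤ ∏ i ∈ range j, (1 + (i:ℝ) - α) :=
    Finset.prod_nonneg (fun i _ => by have : (0:ℝ) ≤ i := Nat.cast_nonneg i; linarith)
  have : (-1:ℝ)^j * gbinom (α - 1) j = (∏ i ∈ range j, (1 + (i:ℝ) - α)) / (j.factorial : ℝ) := by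
    rw [gbinom, mul_div_assoc', key, ← mul_assoc, ← pow_add, Even.neg_one_pow ⟨j, rfl⟩, one_mul]
  rw [this]
  positivity

lemma gbinom_abs_succ {α : ℝ} (h0 : 0 ≤ α) (h1 : α ≤ 1) (j : ℕ) :
    |gbinom α (j+1)| = (-1 : ℝ) ^ j * gbinom α (j+1) := by
  have e1 : ∏ i ∈ range j, (α - ((i+1 : ℕ) : ℝ)) = (-1:ℝ)^j * ∏ i ∈ range j, (1 + (i:ℝ) - α) := by
    rw [← prod_flip]
    exact Finset.prod_congr rfl (fun i _ => by push_cast; ring)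
  have keyg : gbinom α (j+1)
      = (-1:ℝ)^j * ((∏ i ∈ range j, (1 + (i:ℝ) - α)) * α / ((j+1).factorial : ℝ)) := by
    rw [gbinom, Finset.prod_range_succ', e1]
    push_cast
    ring
  have hnn : 0 ≤ (-1:ℝ)^j * gbinom α (j+1) := by
    rw [keyg, ← mul_assoc, ← pow_add, Even.neg_one_pow ⟨j, rfl⟩, one_mul]
    have : 0 ≤ ∏ i ∈ range j, (1 + (i:ℝ) - α) :=
      Finset.prod_nonneg (fun i _ => by have : (0:ℝ) ≤ i := Nat.cast_nonneg i; linarith)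
    positivity
  calc |gbinom α (j+1)| = |(-1:ℝ)^j * gbinom α (j+1)| := by
        rw [abs_mul, abs_pow, abs_neg, abs_one, one_pow, one_mul]
    _ = (-1:ℝ)^j * gbinom α (j+1) := abs_of_nonneg hnn

lemma gbinom_alt_sum (α : ℝ) (N : ℕ) :
    ∑ j ∈ range (N+1), (-1:ℝ)^j * gbinom α j = (-1)^N * gbinom (α-1) N := by
  induction N with
  | zero => simp [gbinom_zero]
  | succ N ih =>
    rw [Finset.sum_range_succ, ih, gbinom_pascal α N]
    ring

lemma gbinom_abs_sum_le {α : ℝ} (h0 : 0 ≤ α) (h1 : α ≤ 1) (N : ℕ) :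
    ∑ j ∈ range N, |gbinom α j| ≤ 2 := by
  cases N with
  | zero => norm_num
  | succ M =>
    rw [Finset.sum_range_succ']
    have hg0 : |gbinom α 0| = 1 := by rw [gbinom_zero]; norm_num
    have halt := gbinom_alt_sum α M
    rw [Finset.sum_range_succ'] at halt
    have flip : ∑ j ∈ range M, (-1:ℝ)^(j+1) * gbinom α (j+1)
        = - ∑ j ∈ range M, (-1:ℝ)^j * gbinom α (j+1) := by
      rw [← Finset.sum_neg_distrib]
      exact Finset.sum_congr rfl (fun j _ => by ring)
    rw [flip] at halt
    simp only [pow_zero, one_mul, gbinom_zero] at halt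
    have hT : 0 ≤ (-1:ℝ)^M * gbinom (α-1) M := gbinom_sign_lower h1 M
    have habs : ∑ j ∈ range M, |gbinom α (j+1)| = ∑ j ∈ range M, (-1:ℝ)^j * gbinom α (j+1) :=
      Finset.sum_congr rfl (fun j _ => gbinom_abs_succ h0 h1 j)
    rw [habs, hg0]
    linarith

lemma gbinom_succ_zero (j : ℕ) : gbinom 0 (j+1) = 0 := by
  rw [gbinom, Finset.prod_eq_zero (Finset.mem_range.2 (Nat.succ_pos j)) (by simp), zero_div]

lemma gbinom_abs_summable_aux : ∀ n : ℕ, ∀ α : ℝ, 0 ≤ α → α ≤ n →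
    Summable (fun j => |gbinom α j|) ∧ (∑' j, |gbinom α j|) ≤ 2 ^ n := by
  intro n
  induction n with
  | zero =>
    intro α h0 h1
    have hα : α = 0 := le_antisymm (by exact_mod_cast h1) h0
    subst hα
    have hzero : ∀ j ∉ ({0} : Finset ℕ), |gbinom 0 j| = 0 := by
      intro j hj
      match j with
      | 0 => exact absurd (Finset.mem_singleton_self 0) hj
      | j+1 => rw [gbinom_succ_zero, abs_zero]
    have hs : Summable (fun j => |gbinom (0:ℝ) j|) := summable_of_ne_finset_zero hzero
    refine ⟨hs, ?_⟩
    rw [tsum_eq_sum hzero]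
    simp [gbinom_zero]
  | succ n ih =>
    intro α h0 hn
    by_cases hle : α ≤ 1
    · have hs : Summable (fun j => |gbinom α j|) :=
        summable_of_sum_range_le (fun j => abs_nonneg _) (gbinom_abs_sum_le h0 hle)
      refine ⟨hs, (Summable.tsum_le_of_sum_range_le hs (gbinom_abs_sum_le h0 hle)).trans ?_⟩
      calc (2:ℝ) = 2^1 := (pow_one 2).symm
        _ ≤ 2^(n+1) := pow_le_pow_right₀ one_le_two (Nat.le_add_left 1 n)
    · push_neg at hle
      have hcast : α - 1 ≤ (n : ℝ) := by
        have : α ≤ ((n+1 : ℕ) : ℝ) := hn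
        push_cast at this
        linarith
      obtain ⟨hs', ht'⟩ := ih (α - 1) (by linarith) hcast
      have hb : ∀ j, |gbinom α (j+1)| ≤ |gbinom (α-1) (j+1)| + |gbinom (α-1) j| := fun j => by
        rw [gbinom_pascal]; exact abs_add_le _ _
      have hs1 : Summable (fun j => |gbinom (α-1) (j+1)|) := by
        have := (summable_nat_add_iff 1).2 hs'
        simpa using this
      have hs2 : Summable (fun j => |gbinom α (j+1)|) :=
        Summable.of_nonneg_of_le (fun j => abs_nonneg _) hb (hs1.add hs')
      have hs : Summable (fun j => |gbinom α j|) :=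
        (summable_nat_add_iff (f := fun j => |gbinom α j|) 1).1 hs2
      refine ⟨hs, ?_⟩
      have e1 := Summable.tsum_eq_zero_add hs
      have e2 := Summable.tsum_eq_zero_add hs'
      have t2 : ∑' j, |gbinom α (j+1)| ≤ ∑' j, (|gbinom (α-1) (j+1)| + |gbinom (α-1) j|) :=
        Summable.tsum_le_tsum hb hs2 (hs1.add hs')
      rw [Summable.tsum_add hs1 hs'] at t2
      have hg0 : |gbinom α 0| = 1 := by rw [gbinom_zero]; norm_num
      have hg0' : |gbinom (α-1) 0| = 1 := by rw [gbinom_zero]; norm_num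
      rw [gbinom_zero] at e2 e1
      norm_num at e2 e1
      rw [e1]
      have h2n : (2:ℝ)^(n+1) = 2 * 2^n := by ring
      rw [h2n]
      linarith


lemma gbinom_abs_summable' {α : ℝ} (h : 0 ≤ α) : Summable (fun j => |gbinom α j|) :=
  (gbinom_abs_summable_aux ⌈α⌉₊ α h (Nat.le_ceil α)).1

lemma gbinom_abs_tsum_le' {α : ℝ} (h : 0 ≤ α) : (∑' j, |gbinom α j|) ≤ 2 ^ (⌈α⌉₊ : ℕ) :=
  (gbinom_abs_summable_aux ⌈α⌉₊ α h (Nat.le_ceil α)).2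

def zser (α : ℝ) (z : ℂ) : ℂ := ∑' j : ℕ, (-1:ℂ)^j * (gbinom α j : ℂ) * z ^ j

lemma zser_term_norm {α : ℝ} {z : ℂ} (hz : ‖z‖ = 1) :
    (fun j => ‖(-1:ℂ)^j * (gbinom α j : ℂ) * z ^ j‖) = fun j => |gbinom α j| := by
  funext j
  simp [norm_mul, norm_pow, hz, Real.norm_eq_abs]

lemma zser_norm_summable {α : ℝ} (hα : 0 ≤ α) {z : ℂ} (hz : ‖z‖ = 1) :
    Summable (fun j => ‖(-1:ℂ)^j * (gbinom α j : ℂ) * z ^ j‖) := by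
  rw [zser_term_norm hz]; exact gbinom_abs_summable' hα

lemma zser_mul (x y : ℝ) (hx : 0 ≤ x) (hy : 0 ≤ y) {z : ℂ} (hz : ‖z‖ = 1) :
    zser x z * zser y z = zser (x + y) z := by
  rw [zser, zser, zser,
    tsum_mul_tsum_eq_tsum_sum_antidiagonal_of_summable_norm (zser_norm_summable hx hz)
      (zser_norm_summable hy hz)]
  congr 1
  funext n
  rw [eq_comm, gbinom_add]
  push_cast
  rw [Finset.mul_sum, Finset.sum_mul]
  apply Finset.sum_congr rfl
  intro ij hij
  have h := Finset.HasAntidiagonal.mem_antidiagonal.1 hij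
  rw [← h, pow_add, pow_add]
  ring

lemma zser_norm_le {α : ℝ} (hα : 0 ≤ α) {z : ℂ} (hz : ‖z‖ = 1) :
    ‖zser α z‖ ≤ 2 ^ (⌈α⌉₊ : ℕ) := by
  calc ‖zser α z‖ ≤ ∑' j, ‖(-1:ℂ)^j * (gbinom α j : ℂ) * z ^ j‖ :=
        norm_tsum_le_tsum_norm (zser_norm_summable hα hz)
    _ = ∑' j, |gbinom α j| := by rw [zser_term_norm hz]
    _ ≤ 2 ^ (⌈α⌉₊ : ℕ) := gbinom_abs_tsum_le' hα

lemma norm_exp_neg_Ik (k : ℤ) (x : ℝ) : ‖Complex.exp (-(Complex.I * (k:ℂ) * (x:ℂ)))‖ = 1 := by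
  rw [show -(Complex.I * (k:ℂ) * (x:ℂ)) = ((-(k * x) : ℝ) : ℂ) * Complex.I by push_cast; ring]
  exact Complex.norm_exp_ofReal_mul_I _

lemma exp_two_pi_k (k : ℤ) : Complex.exp (-(Complex.I * (k:ℂ) * ((2*Real.pi : ℝ):ℂ))) = 1 := by
  rw [show -(Complex.I * (k:ℂ) * ((2*Real.pi : ℝ):ℂ)) = ((-k : ℤ):ℂ) * (2 * (Real.pi:ℂ) * Complex.I) by
    push_cast; ring]
  exact Complex.exp_int_mul_two_pi_mul_I (-k)

lemma periodic_intervalIntegrable {f : ℝ → ℂ} (hper : Function.Periodic f (2*Real.pi))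
    (hint : IntervalIntegrable f volume 0 (2*Real.pi)) (a b : ℝ) :
    IntervalIntegrable f volume a b := by
  set T : ℝ := 2*Real.pi with hT
  have hT0 : 0 < T := by positivity
  have step1 : ∀ n : ℤ, IntervalIntegrable f volume (n*T) (n*T + T) := by
    intro n
    have h := hint.comp_sub_right (n*T)
    have he : (fun x => f (x - n*T)) = f := funext (fun x => hper.sub_int_mul_eq n)
    rw [he] at h
    simpa [zero_add, add_comm] using h
  have step2 : ∀ m : ℤ, ∀ k : ℕ, IntervalIntegrable f volume (m*T) ((m+k)*T) := by
    intro m k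
    induction k with
    | zero => simp
    | succ k ih =>
      have h2 := step1 (m + k)
      push_cast at h2 ih ⊢
      rw [show ((m : ℝ) + ((k:ℝ)+1)) * T = ((m:ℝ)+(k:ℝ)) * T + T by ring]
      exact ih.trans h2
  suffices H : ∀ a b : ℝ, a ≤ b → IntervalIntegrable f volume a b by
    rcases le_total a b with h | h
    · exact H a b h
    · exact (H b a h).symm
  clear a b
  intro a b hab
  · set m : ℤ := ⌊a / T⌋ with hm
    have hma : (m : ℝ) * T ≤ a := by
      rw [hm]
      have := Int.floor_le (a / T)
      calc ((⌊a/T⌋ : ℤ) : ℝ) * T ≤ (a/T) * T := by nlinarith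
        _ = a := by field_simp
    set kk : ℕ := ⌈(b - m*T)/T⌉₊ with hk
    have hkb : b ≤ ((m:ℝ) + kk) * T := by
      have h1 : (b - m*T)/T ≤ (kk : ℝ) := Nat.le_ceil _
      have h2 : b - m*T ≤ kk * T := by
        rw [div_le_iff₀ hT0] at h1
        linarith
      nlinarith [hT0]
    have hsub : Set.uIcc a b ⊆ Set.uIcc ((m:ℝ)*T) (((m:ℝ)+kk)*T) := by
      rw [Set.uIcc_of_le hab, Set.uIcc_of_le (by nlinarith : (m:ℝ)*T ≤ ((m:ℝ)+kk)*T)]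
      exact Set.Icc_subset_Icc hma hkb
    have h := step2 m kk
    push_cast at h
    exact h.mono_set hsub

lemma translate_intervalIntegrable {f : ℝ → ℂ} (hper : Function.Periodic f (2*Real.pi))
    (hint : IntervalIntegrable f volume 0 (2*Real.pi)) (a : ℝ) :
    IntervalIntegrable (fun t => f (t - a)) volume 0 (2*Real.pi) := by
  have h := (periodic_intervalIntegrable hper hint (-a) (2*Real.pi - a)).comp_sub_right a
  simpa using h

lemma translate_norm_integral {f : ℝ → ℂ} (hper : Function.Periodic f (2*Real.pi)) (a : ℝ) :
    ∫ t in (0:ℝ)..(2*Real.pi), ‖f (t - a)‖ = ∫ t in (0:ℝ)..(2*Real.pi), ‖f t‖ := by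
  rw [intervalIntegral.integral_comp_sub_right (fun u => ‖f u‖) a]
  have hper' : Function.Periodic (fun u => ‖f u‖) (2*Real.pi) := fun x => by simp [hper x]
  rw [show (0:ℝ) - a = -a by ring, show 2*Real.pi - a = -a + 2*Real.pi by ring]
  simpa using hper'.intervalIntegral_add_eq (-a) 0

lemma fcoeff_translate {f : ℝ → ℂ} (hper : Function.Periodic f (2*Real.pi)) (a : ℝ) (k : ℤ) :
    fcoeff (fun t => f (t - a)) k
      = Complex.exp (-(Complex.I * (k:ℂ) * (a:ℂ))) * fcoeff f k := by
  have key : ∫ t in (0:ℝ)..(2*Real.pi), f (t-a) * Complex.exp (-(Complex.I * (k:ℂ) * (t:ℂ)))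
      = Complex.exp (-(Complex.I * (k:ℂ) * (a:ℂ))) *
        ∫ t in (0:ℝ)..(2*Real.pi), f t * Complex.exp (-(Complex.I * (k:ℂ) * (t:ℂ))) := by
    set g : ℝ → ℂ := fun u => f u * Complex.exp (-(Complex.I * (k:ℂ) * ((u:ℝ)+a:ℝ))) with hg
    have hgt : Set.EqOn (fun t => f (t-a) * Complex.exp (-(Complex.I * (k:ℂ) * (t:ℂ))))
        (fun t => g (t - a)) (Set.uIcc 0 (2*Real.pi)) := by
      intro t _
      simp only [hg]
      congr 2
      push_cast
      ring
    rw [intervalIntegral.integral_congr hgt, intervalIntegral.integral_comp_sub_right g a]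
    have hge : g = fun u => Complex.exp (-(Complex.I * (k:ℂ) * (a:ℂ))) *
        (f u * Complex.exp (-(Complex.I * (k:ℂ) * (u:ℂ)))) := by
      funext u
      simp only [hg]
      rw [show -(Complex.I * (k:ℂ) * (((u:ℝ)+a:ℝ):ℂ))
        = -(Complex.I * (k:ℂ) * (a:ℂ)) + -(Complex.I * (k:ℂ) * (u:ℂ)) by push_cast; ring]
      rw [Complex.exp_add]
      ring
    rw [hge, intervalIntegral.integral_const_mul]
    congr 1
    have hFper : Function.Periodic
        (fun u : ℝ => f u * Complex.exp (-(Complex.I * (k:ℂ) * (u:ℂ)))) (2*Real.pi) := by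
      intro x
      simp only
      rw [hper x]
      congr 1
      rw [show -(Complex.I * (k:ℂ) * (((x:ℝ)+2*Real.pi:ℝ):ℂ))
        = -(Complex.I * (k:ℂ) * (x:ℂ)) + -(Complex.I * (k:ℂ) * ((2*Real.pi:ℝ):ℂ)) by push_cast; ring]
      rw [Complex.exp_add, exp_two_pi_k, mul_one]
    rw [show (0:ℝ) - a = -a by ring, show 2*Real.pi - a = -a + 2*Real.pi by ring]
    simpa using hFper.intervalIntegral_add_eq (-a) 0
  unfold fcoeff
  rw [key]
  ring

lemma fcoeff_fracDiff {f : ℝ → ℂ} (hper : Function.Periodic f (2*Real.pi))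
    (hint : IntervalIntegrable f volume 0 (2*Real.pi)) {α : ℝ} (hα : 0 ≤ α) (h : ℝ) (k : ℤ) :
    fcoeff (fracDiff α h f) k
      = zser α (Complex.exp (-(Complex.I * (k:ℂ) * (h:ℂ)))) * fcoeff f k := by
  have hT0 : (0:ℝ) ≤ 2*Real.pi := by positivity
  set F : ℕ → ℝ → ℂ := fun j t => ((-1:ℂ)^j * (gbinom α j : ℂ)) *
      (f (t - (j:ℝ)*h) * Complex.exp (-(Complex.I * (k:ℂ) * (t:ℂ)))) with hF
  -- pointwise identity
  have hpoint : ∀ t : ℝ, fracDiff α h f t * Complex.exp (-(Complex.I * (k:ℂ) * (t:ℂ)))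
      = ∑' j, F j t := by
    intro t
    rw [fracDiff, ← tsum_mul_right]
    exact tsum_congr (fun j => mul_assoc _ _ _)
  have hstep1 : fcoeff (fracDiff α h f) k
      = (1 / (2 * (Real.pi : ℂ))) * ∫ t in (0:ℝ)..(2*Real.pi), ∑' j, F j t := by
    unfold fcoeff
    congr 1
    exact intervalIntegral.integral_congr (fun t _ => hpoint t)
  -- integrability of each term
  have hcont : ∀ k' : ℤ, Continuous (fun t : ℝ => Complex.exp (-(Complex.I * (k':ℂ) * (t:ℂ)))) := by
    intro k'
    have : Continuous fun t : ℝ => -(Complex.I * (k':ℂ) * (t:ℂ)) := by continuity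
    exact Complex.continuous_exp.comp this
  have hFint : ∀ j : ℕ, IntervalIntegrable (F j) volume 0 (2*Real.pi) := by
    intro j
    have h1 := translate_intervalIntegrable hper hint ((j:ℝ)*h)
    have h2 : IntervalIntegrable
        (fun t => f (t - (j:ℝ)*h) * Complex.exp (-(Complex.I * (k:ℂ) * (t:ℂ)))) volume 0 (2*Real.pi) :=
      h1.mul_continuousOn (hcont k).continuousOn
    exact h2.const_mul _
  have hFint' : ∀ j : ℕ, Integrable (F j) (volume.restrict (Set.Ioc (0:ℝ) (2*Real.pi))) := by
    intro j
    have := (intervalIntegrable_iff_integrableOn_Ioc_of_le hT0).1 (hFint j)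
    exact this
  -- summability of integrals of norms
  have hnorm : ∀ j : ℕ, ∫ t in Set.Ioc (0:ℝ) (2*Real.pi), ‖F j t‖
      = |gbinom α j| * ∫ t in (0:ℝ)..(2*Real.pi), ‖f t‖ := by
    intro j
    rw [← intervalIntegral.integral_of_le hT0]
    have he : Set.EqOn (fun t => ‖F j t‖)
        (fun t => |gbinom α j| * ‖f (t - (j:ℝ)*h)‖) (Set.uIcc 0 (2*Real.pi)) := by
      intro t _
      simp only [hF, norm_mul, norm_pow, norm_neg, norm_one, one_pow, one_mul,
        Complex.norm_real, Real.norm_eq_abs, norm_exp_neg_Ik, mul_one]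
    rw [intervalIntegral.integral_congr he, intervalIntegral.integral_const_mul,
      translate_norm_integral hper]
  have hFsum : Summable (fun j => ∫ t in Set.Ioc (0:ℝ) (2*Real.pi), ‖F j t‖) := by
    rw [funext hnorm]
    exact (gbinom_abs_summable' hα).mul_right _
  have hswap : ∫ t in Set.Ioc (0:ℝ) (2*Real.pi), ∑' j, F j t
      = ∑' j, ∫ t in Set.Ioc (0:ℝ) (2*Real.pi), F j t :=
    (integral_tsum_of_summable_integral_norm hFint' hFsum).symm
  -- evaluate each integral
  have hterm : ∀ j : ℕ, (1 / (2 * (Real.pi : ℂ))) * ∫ t in (0:ℝ)..(2*Real.pi), F j t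
      = ((-1:ℂ)^j * (gbinom α j : ℂ) * Complex.exp (-(Complex.I * (k:ℂ) * (h:ℂ))) ^ j)
        * fcoeff f k := by
    intro j
    have : ∫ t in (0:ℝ)..(2*Real.pi), F j t
        = ((-1:ℂ)^j * (gbinom α j : ℂ)) *
          ∫ t in (0:ℝ)..(2*Real.pi),
            f (t - (j:ℝ)*h) * Complex.exp (-(Complex.I * (k:ℂ) * (t:ℂ))) := by
      rw [← intervalIntegral.integral_const_mul]
    rw [this]
    have htrans := fcoeff_translate hper ((j:ℝ)*h) k
    unfold fcoeff at htrans ⊢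
    rw [show (1 / (2 * (Real.pi : ℂ))) * (((-1:ℂ)^j * (gbinom α j : ℂ)) *
        ∫ t in (0:ℝ)..(2*Real.pi), f (t - (j:ℝ)*h) * Complex.exp (-(Complex.I * (k:ℂ) * (t:ℂ))))
      = ((-1:ℂ)^j * (gbinom α j : ℂ)) * ((1 / (2 * (Real.pi : ℂ))) *
        ∫ t in (0:ℝ)..(2*Real.pi), f (t - (j:ℝ)*h) * Complex.exp (-(Complex.I * (k:ℂ) * (t:ℂ))))
      by ring]
    rw [htrans]
    rw [show Complex.exp (-(Complex.I * (k:ℂ) * (((j:ℝ)*h : ℝ):ℂ)))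
      = Complex.exp ((j:ℕ) * -(Complex.I * (k:ℂ) * (h:ℂ))) by congr 1; push_cast; ring]
    rw [Complex.exp_nat_mul]
    ring
  -- assemble
  rw [hstep1, intervalIntegral.integral_of_le hT0, hswap, ← tsum_mul_left]
  rw [show (∑' j, (1 / (2 * (Real.pi : ℂ))) * ∫ t in Set.Ioc (0:ℝ) (2*Real.pi), F j t)
    = ∑' j, ((-1:ℂ)^j * (gbinom α j : ℂ) * Complex.exp (-(Complex.I * (k:ℂ) * (h:ℂ))) ^ j)
        * fcoeff f k from tsum_congr (fun j => by
      rw [← intervalIntegral.integral_of_le hT0]; exact hterm j)]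
  rw [tsum_mul_right]
  rfl

lemma lpSet_scale {p μ : ℤ → ℝ} (hp : ∀ k, 1 ≤ p k) (hμ : ∀ k, 0 ≤ μ k) {g h : ℝ → ℂ} {c : ℝ}
    (hc : 0 < c) (hk : ∀ k, ‖fcoeff g k‖ ≤ c * ‖fcoeff h k‖)
    {a : ℝ} (ha : a ∈ lpSet p μ h) : c * a ∈ lpSet p μ g := by
  obtain ⟨ha0, hsum, hle⟩ := ha
  have hterm : ∀ k : ℤ, μ k * (‖fcoeff g k‖ / (c*a)) ^ (p k)
      ≤ μ k * (‖fcoeff h k‖ / a) ^ (p k) := by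
    intro k
    refine mul_le_mul_of_nonneg_left ?_ (hμ k)
    refine Real.rpow_le_rpow (div_nonneg (norm_nonneg _) (by positivity)) ?_
      (le_trans zero_le_one (hp k))
    rw [div_le_div_iff₀ (by positivity) ha0]
    calc ‖fcoeff g k‖ * a ≤ (c * ‖fcoeff h k‖) * a :=
          mul_le_mul_of_nonneg_right (hk k) ha0.le
      _ = ‖fcoeff h k‖ * (c*a) := by ring
  have hnn : ∀ k : ℤ, 0 ≤ μ k * (‖fcoeff g k‖ / (c*a)) ^ (p k) := by
    intro k
    have := Real.rpow_nonneg (x := ‖fcoeff g k‖ / (c*a))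
      (div_nonneg (norm_nonneg _) (by positivity)) (p k)
    exact mul_nonneg (hμ k) this
  have hsum' : Summable (fun k : ℤ => μ k * (‖fcoeff g k‖ / (c*a)) ^ (p k)) :=
    Summable.of_nonneg_of_le hnn hterm hsum
  exact ⟨by positivity, hsum', le_trans (Summable.tsum_le_tsum hterm hsum' hsum) hle⟩

lemma luxNorm_le_of_coeff_le {p μ : ℤ → ℝ} (hp : ∀ k, 1 ≤ p k) (hμ : ∀ k, 0 ≤ μ k)
    {g h : ℝ → ℂ} {c : ℝ} (hc : 0 < c)
    (hk : ∀ k, ‖fcoeff g k‖ ≤ c * ‖fcoeff h k‖)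
    (hne : (lpSet p μ h).Nonempty) : luxNorm p μ g ≤ c * luxNorm p μ h := by
  have h2 : luxNorm p μ g / c ≤ sInf (lpSet p μ h) := by
    refine le_csInf hne ?_
    intro a ha
    rw [div_le_iff₀ hc, mul_comm]
    exact csInf_le ⟨0, fun x hx => hx.1.le⟩ (lpSet_scale hp hμ hc hk ha)
  rw [div_le_iff₀ hc] at h2
  rw [luxNorm, mul_comm]
  exact h2

/-- for `α ≥ β > 0`, `ω_α(f,δ)_{p,μ} ≤ 2^{⌈α−β⌉} ω_β(f,δ)_{p,μ}`. -/
theorem stmt_4 (K : ℝ) (p μ : ℤ → ℝ) (hp : ∀ k : ℤ, 1 ≤ p k ∧ p k ≤ K)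
    (hμ : ∀ k : ℤ, 0 ≤ μ k) (f : ℝ → ℂ) (hf : MemS p μ f)
    (α β : ℝ) (hβ : 0 < β) (hβα : β ≤ α) (δ : ℝ) (hδ : 0 < δ) :
    modulus p μ α f δ ≤ 2 ^ (⌈α - β⌉₊ : ℕ) * modulus p μ β f δ := by
  obtain ⟨hper, hint, hne⟩ := hf
  have hα : (0:ℝ) < α := lt_of_lt_of_le hβ hβα
  set γ := α - β with hγ
  have hγ0 : 0 ≤ γ := by simp only [hγ]; linarith
  have hp1 : ∀ k, 1 ≤ p k := fun k => (hp k).1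
  have key : ∀ h : ℝ, ∀ k : ℤ, ‖fcoeff (fracDiff α h f) k‖
      ≤ 2 ^ (⌈γ⌉₊:ℕ) * ‖fcoeff (fracDiff β h f) k‖ := by
    intro h k
    set z := Complex.exp (-(Complex.I * (k:ℂ) * (h:ℂ))) with hzdef
    have hz1 : ‖z‖ = 1 := norm_exp_neg_Ik k h
    have hA := fcoeff_fracDiff hper hint hα.le h k
    have hB := fcoeff_fracDiff hper hint hβ.le h k
    have hmul : zser α z = zser γ z * zser β z := by
      rw [zser_mul γ β hγ0 hβ.le hz1]
      congr 1
      simp only [hγ]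
      ring
    rw [hA, hB, hmul, mul_assoc, norm_mul]
    refine mul_le_mul_of_nonneg_right ?_ (norm_nonneg _)
    have := zser_norm_le hγ0 hz1
    exact this
  have keyβ : ∀ h : ℝ, ∀ k : ℤ, ‖fcoeff (fracDiff β h f) k‖
      ≤ 2 ^ (⌈β⌉₊:ℕ) * ‖fcoeff f k‖ := by
    intro h k
    rw [fcoeff_fracDiff hper hint hβ.le h k, norm_mul]
    refine mul_le_mul_of_nonneg_right ?_ (norm_nonneg _)
    have := zser_norm_le hβ.le (norm_exp_neg_Ik k h)
    exact this
  have c2pos : (0:ℝ) < 2 ^ (⌈γ⌉₊:ℕ) := by positivity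
  have cβpos : (0:ℝ) < 2 ^ (⌈β⌉₊:ℕ) := by positivity
  have hneβ : ∀ h : ℝ, (lpSet p μ (fracDiff β h f)).Nonempty := by
    intro h
    obtain ⟨a, ha⟩ := hne
    exact ⟨_, lpSet_scale hp1 hμ cβpos (keyβ h) ha⟩
  have lux1 : ∀ h : ℝ, luxNorm p μ (fracDiff α h f)
      ≤ 2 ^ (⌈γ⌉₊:ℕ) * luxNorm p μ (fracDiff β h f) :=
    fun h => luxNorm_le_of_coeff_le hp1 hμ c2pos (key h) (hneβ h)
  have luxβ : ∀ h : ℝ, luxNorm p μ (fracDiff β h f) ≤ 2 ^ (⌈β⌉₊:ℕ) * luxNorm p μ f :=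
    fun h => luxNorm_le_of_coeff_le hp1 hμ cβpos (keyβ h) hne
  haveI : Nonempty {h : ℝ // |h| ≤ δ} := ⟨⟨0, by simp [hδ.le]⟩⟩
  have hbdd : BddAbove (Set.range
      (fun h : {h : ℝ // |h| ≤ δ} => luxNorm p μ (fracDiff β h.1 f))) := by
    refine ⟨2 ^ (⌈β⌉₊:ℕ) * luxNorm p μ f, ?_⟩
    rintro x ⟨h, rfl⟩
    exact luxβ h.1
  rw [modulus]
  apply ciSup_le
  intro h
  calc luxNorm p μ (fracDiff α h.1 f)
      ≤ 2 ^ (⌈γ⌉₊:ℕ) * luxNorm p μ (fracDiff β h.1 f) := lux1 h.1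
    _ ≤ 2 ^ (⌈γ⌉₊:ℕ) * modulus p μ β f δ := by
        refine mul_le_mul_of_nonneg_left ?_ c2pos.le
        exact le_ciSup hbdd h
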